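/- Let γ ≥ 2 be an integer, and suppose real numbers X > 0, b with 2 ≤ b satisfy (2/γ + 1/(γ−1) + 1/(b−1))X² − 4bX + γ(b² − b) ≤ 0. Then b > γ − 3. -/

import Mathlib

theorem conference_discriminant_bound
    (γ : ℤ) (hγ : 2 ≤ γ) (X b : ℝ) (hX : 0 < X) (hb : 2 ≤ b)
    (h : (2 / (γ : ℝ) + 1 / ((γ : ℝ) - 1) + 1 / (b - 1)) * X ^ 2 - 4 * b * X
          + (γ : ℝ) * (b ^ 2 - b) ≤ 0) :
    (γ : ℝ) - 3 < b := by
  set g : ℝ := (γ : ℝ) with hg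
  have hg2 : (2 : ℝ) ≤ g := by rw [hg]; exact_mod_cast hγ
  have hgpos : 0 < g := by linarith
  have hg1 : 0 < g - 1 := by linarith
  have hb1 : 0 < b - 1 := by linarith
  set A : ℝ := 2 / g + 1 / (g - 1) + 1 / (b - 1) with hA
  set C : ℝ := g * (b ^ 2 - b) with hC
  have hApos : 0 < A := by positivity
  have hCpos : 0 < C := by
    have : 0 < b ^ 2 - b := by nlinarith
    positivity
  have h1 : A * X ^ 2 + C ≤ 4 * b * X := by linarith
  have hlhs : 0 ≤ A * X ^ 2 + C := by positivity
  have hsq : (A * X ^ 2 + C) ^ 2 ≤ (4 * b * X) ^ 2 := by nlinarith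
  have key : A * C ≤ 4 * b ^ 2 := by
    have hX2 : 0 < X ^ 2 := by positivity
    nlinarith [sq_nonneg (A * X ^ 2 - C)]
  have e1 : (2 / g) * C = 2 * (b ^ 2 - b) := by
    rw [hC]; field_simp
  have e3 : (1 / (b - 1)) * C = g * b := by
    rw [hC]; field_simp
  have e2 : (b ^ 2 - b) < (1 / (g - 1)) * C := by
    rw [hC]
    have hlt : (1 : ℝ) < g / (g - 1) := by
      rw [lt_div_iff₀ hg1]; linarith
    have hbb : 0 < b ^ 2 - b := by nlinarith
    calc b ^ 2 - b = 1 * (b ^ 2 - b) := by ring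
      _ < (g / (g - 1)) * (b ^ 2 - b) := by
          exact mul_lt_mul_of_pos_right hlt hbb
      _ = (1 / (g - 1)) * (g * (b ^ 2 - b)) := by ring
  have expand : A * C = (2 / g) * C + (1 / (g - 1)) * C + (1 / (b - 1)) * C := by
    rw [hA]; ring
  clear_value A C
  have hfin : g * b < b ^ 2 + 3 * b := by linarith
  have hbpos : 0 < b := by linarith
  nlinarith [hfin, mul_pos hbpos hbpos]
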